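/- σ_A² ≤ σ_B², and equality σ_A² = σ_B² holds if and only if for every z ∈ 𝒵 both β(z) = {π_s β_t(z) + π_t β_s(z)}/(π_s + π_t) and (1 − π_t − π_s)(β_t(z) − β_s(z)) = 0. -/

import Mathlib

open MeasureTheory ProbabilityTheory Matrix
open scoped ProbabilityTheory



private lemma integrable_mul₂ {Ω : Type*} [MeasurableSpace Ω] {μ : Measure Ω}
    {f g : Ω → ℝ} (hf : MemLp f 2 μ) (hg : MemLp g 2 μ) :
    Integrable (fun ω => f ω * g ω) μ := by
  have hfg : MemLp (fun ω => f ω + g ω) 2 μ := hf.add hg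
  have h1 : Integrable (fun ω => ((f ω + g ω) ^ 2 - f ω ^ 2 - g ω ^ 2) / 2) μ :=
    ((hfg.integrable_sq.sub hf.integrable_sq).sub hg.integrable_sq).div_const 2
  exact h1.congr (Filter.EventuallyEq.of_eq (funext fun ω => by ring))

private lemma var_expand {Ω : Type*} [MeasurableSpace Ω] {μ : Measure Ω}
    [IsProbabilityMeasure μ] {d : ℕ} {f : Ω → ℝ} {X : Ω → Fin d → ℝ}
    (hf : MemLp f 2 μ) (hX : ∀ j, MemLp (fun ω => X ω j) 2 μ) (b : Fin d → ℝ) :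
    variance (fun ω => f ω - ∑ j, X ω j * b j) μ
      = variance f μ
        - 2 * ∑ j, b j * ((∫ ω, X ω j * f ω ∂μ) - (∫ ω, X ω j ∂μ) * (∫ ω, f ω ∂μ))
        + ∑ j, ∑ l, b j * b l *
            ((∫ ω, X ω j * X ω l ∂μ) - (∫ ω, X ω j ∂μ) * (∫ ω, X ω l ∂μ)) := by
  have hXb : ∀ j, MemLp (fun ω => X ω j * b j) 2 μ := fun j => by
    simpa [mul_comm] using (hX j).const_mul (b j)
  have hS : MemLp (fun ω => ∑ j, X ω j * b j) 2 μ := by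
    have := memLp_finset_sum' (μ := μ) (p := 2) Finset.univ
      (f := fun j ω => X ω j * b j) (fun j _ => hXb j)
    simpa [Finset.sum_fn] using this
  have hg : MemLp (fun ω => f ω - ∑ j, X ω j * b j) 2 μ := hf.sub hS
  have hfi : Integrable f μ := hf.integrable one_le_two
  have hXi : ∀ j, Integrable (fun ω => X ω j) μ := fun j => (hX j).integrable one_le_two
  have hSi : Integrable (fun ω => ∑ j, X ω j * b j) μ :=
    integrable_finset_sum _ fun j _ => (hXi j).mul_const _
  have hff : Integrable (fun ω => f ω * f ω) μ := integrable_mul₂ hf hf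
  have hT1i : Integrable (fun ω => ∑ j, (2 * b j) * (X ω j * f ω)) μ :=
    integrable_finset_sum _ fun j _ => (integrable_mul₂ (hX j) hf).const_mul _
  have hT2i : Integrable (fun ω => ∑ j, ∑ l, (b j * b l) * (X ω j * X ω l)) μ :=
    integrable_finset_sum _ fun j _ =>
      integrable_finset_sum _ fun l _ => (integrable_mul₂ (hX j) (hX l)).const_mul _
  -- first moment
  have hm : (∫ ω, (f ω - ∑ j, X ω j * b j) ∂μ)
      = (∫ ω, f ω ∂μ) - ∑ j, (∫ ω, X ω j ∂μ) * b j := by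
    rw [integral_sub hfi hSi, integral_finset_sum _ fun j _ => (hXi j).mul_const _]
    simp [integral_mul_const]
  -- second moment
  have hsq : (∫ ω, (f ω - ∑ j, X ω j * b j) ^ 2 ∂μ)
      = (∫ ω, f ω * f ω ∂μ) - 2 * ∑ j, b j * (∫ ω, X ω j * f ω ∂μ)
        + ∑ j, ∑ l, (b j * b l) * (∫ ω, X ω j * X ω l ∂μ) := by
    have key : ∀ ω, (f ω - ∑ j, X ω j * b j) ^ 2
        = f ω * f ω - (∑ j, (2 * b j) * (X ω j * f ω))
          + ∑ j, ∑ l, (b j * b l) * (X ω j * X ω l) := by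
      intro ω
      have h1 : f ω * (∑ j, X ω j * b j) = ∑ j, b j * (X ω j * f ω) := by
        rw [Finset.mul_sum]; exact Finset.sum_congr rfl fun j _ => by ring
      have h2 : (∑ j, X ω j * b j) * (∑ j, X ω j * b j)
          = ∑ j, ∑ l, (b j * b l) * (X ω j * X ω l) := by
        rw [Finset.sum_mul_sum]
        exact Finset.sum_congr rfl fun j _ => Finset.sum_congr rfl fun l _ => by ring
      have h3 : (∑ j, (2 * b j) * (X ω j * f ω)) = 2 * ∑ j, b j * (X ω j * f ω) := by
        rw [Finset.mul_sum]; exact Finset.sum_congr rfl fun j _ => by ring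
      linear_combination (-2 : ℝ) * h1 + h2 + h3
    have e0 : (∫ ω, (f ω - ∑ j, X ω j * b j) ^ 2 ∂μ)
        = ∫ ω, (f ω * f ω - (∑ j, (2 * b j) * (X ω j * f ω))
            + ∑ j, ∑ l, (b j * b l) * (X ω j * X ω l)) ∂μ := by
      exact integral_congr_ae (Filter.EventuallyEq.of_eq (funext key))
    have hsub : Integrable (fun ω => f ω * f ω - ∑ j, (2 * b j) * (X ω j * f ω)) μ :=
      hff.sub hT1i
    rw [e0, integral_add hsub hT2i, integral_sub hff hT1i,
      integral_finset_sum _ fun j _ => (integrable_mul₂ (hX j) hf).const_mul _,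
      integral_finset_sum _ fun j _ =>
        integrable_finset_sum _ fun l _ => (integrable_mul₂ (hX j) (hX l)).const_mul _]
    have e1 : ∑ j, (∫ ω, (2 * b j) * (X ω j * f ω) ∂μ)
        = 2 * ∑ j, b j * (∫ ω, X ω j * f ω ∂μ) := by
      rw [Finset.mul_sum]
      exact Finset.sum_congr rfl fun j _ => by rw [integral_const_mul]; ring
    have e2 : ∑ j, (∫ ω, (∑ l, (b j * b l) * (X ω j * X ω l)) ∂μ)
        = ∑ j, ∑ l, (b j * b l) * (∫ ω, X ω j * X ω l ∂μ) := by
      refine Finset.sum_congr rfl fun j _ => ?_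
      rw [integral_finset_sum _ fun l _ => (integrable_mul₂ (hX j) (hX l)).const_mul _]
      exact Finset.sum_congr rfl fun l _ => integral_const_mul _ _
    rw [e1, e2]
  -- put it together
  rw [variance_eq_sub hg, variance_eq_sub hf]
  have hff' : (∫ ω, f ω ^ 2 ∂μ) = ∫ ω, f ω * f ω ∂μ := by
    refine integral_congr_ae (Filter.EventuallyEq.of_eq (funext fun ω => ?_)); ring
  have hg2 : μ[(fun ω => f ω - ∑ j, X ω j * b j) ^ 2]
      = ∫ ω, (f ω - ∑ j, X ω j * b j) ^ 2 ∂μ := rfl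
  have hf2 : μ[f ^ 2] = ∫ ω, f ω ^ 2 ∂μ := rfl
  rw [hg2, hf2, hsq, hff', hm]
  have hA : ∑ j, b j * ((∫ ω, X ω j * f ω ∂μ) - (∫ ω, X ω j ∂μ) * (∫ ω, f ω ∂μ))
      = (∑ j, b j * (∫ ω, X ω j * f ω ∂μ))
        - (∑ j, (∫ ω, X ω j ∂μ) * b j) * (∫ ω, f ω ∂μ) := by
    rw [Finset.sum_mul, ← Finset.sum_sub_distrib]
    exact Finset.sum_congr rfl fun j _ => by ring
  have hB : ∑ j, ∑ l, b j * b l *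
        ((∫ ω, X ω j * X ω l ∂μ) - (∫ ω, X ω j ∂μ) * (∫ ω, X ω l ∂μ))
      = (∑ j, ∑ l, (b j * b l) * (∫ ω, X ω j * X ω l ∂μ))
        - (∑ j, (∫ ω, X ω j ∂μ) * b j) * (∑ j, (∫ ω, X ω j ∂μ) * b j) := by
    rw [Finset.sum_mul_sum, ← Finset.sum_sub_distrib]
    refine Finset.sum_congr rfl fun j _ => ?_
    rw [← Finset.sum_sub_distrib]
    exact Finset.sum_congr rfl fun l _ => by ring
  linear_combination (2 : ℝ) * hA - hB


private lemma dot_mulVec_eq_sum {d : ℕ} (M : Matrix (Fin d) (Fin d) ℝ) (x y : Fin d → ℝ) :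
    x ⬝ᵥ (M *ᵥ y) = ∑ j, ∑ l, x j * (M j l * y l) := by
  simp [dotProduct, Matrix.mulVec, Finset.mul_sum]

private lemma quad_diff {d : ℕ} (M : Matrix (Fin d) (Fin d) ℝ)
    (hsym : ∀ j l, M j l = M l j) (b βv : Fin d → ℝ) :
    -2 * ∑ j, b j * (∑ l, M j l * βv l) + ∑ j, ∑ l, b j * b l * M j l
      = -2 * ∑ j, βv j * (∑ l, M j l * βv l) + ∑ j, ∑ l, βv j * βv l * M j l
        + ∑ j, ∑ l, (b j - βv j) * (M j l * (b l - βv l)) := by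
  have f1 : ∑ j, b j * (∑ l, M j l * βv l) = ∑ j, ∑ l, b j * βv l * M j l := by
    refine Finset.sum_congr rfl fun j _ => ?_
    rw [Finset.mul_sum]; exact Finset.sum_congr rfl fun l _ => by ring
  have f2 : ∑ j, βv j * (∑ l, M j l * βv l) = ∑ j, ∑ l, βv j * βv l * M j l := by
    refine Finset.sum_congr rfl fun j _ => ?_
    rw [Finset.mul_sum]; exact Finset.sum_congr rfl fun l _ => by ring
  have f4 : ∑ j, ∑ l, βv j * b l * M j l = ∑ j, ∑ l, b j * βv l * M j l := by
    rw [Finset.sum_comm]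
    exact Finset.sum_congr rfl fun j _ => Finset.sum_congr rfl fun l _ => by
      rw [hsym l j]; ring
  have f3 : ∑ j, ∑ l, (b j - βv j) * (M j l * (b l - βv l))
      = ∑ j, ∑ l, b j * b l * M j l - ∑ j, ∑ l, b j * βv l * M j l
        - (∑ j, ∑ l, βv j * b l * M j l - ∑ j, ∑ l, βv j * βv l * M j l) := by
    calc ∑ j, ∑ l, (b j - βv j) * (M j l * (b l - βv l))
        = ∑ j, ∑ l, (b j * b l * M j l - b j * βv l * M j l
            - (βv j * b l * M j l - βv j * βv l * M j l)) :=
          Finset.sum_congr rfl fun j _ => Finset.sum_congr rfl fun l _ => by ring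
      _ = _ := by simp only [Finset.sum_sub_distrib]
  rw [f1, f2, f3, f4]; ring

private lemma key_ineq {d : ℕ} (M : Matrix (Fin d) (Fin d) ℝ)
    (hsym : ∀ j l, M j l = M l j) {πt πs : ℝ} (hπt : 0 < πt) (hπs : 0 < πs)
    (u v : Fin d → ℝ) :
    (u ⬝ᵥ (M *ᵥ u)) / πt + (v ⬝ᵥ (M *ᵥ v)) / πs - ((v - u) ⬝ᵥ (M *ᵥ (v - u)))
      = ((πs • u + πt • v) ⬝ᵥ (M *ᵥ (πs • u + πt • v))) / (πt * πs * (πt + πs))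
        + ((1 - πt - πs) / (πt + πs)) * ((v - u) ⬝ᵥ (M *ᵥ (v - u))) := by
  have hswap : ∑ j, ∑ l, v j * (M j l * u l) = ∑ j, ∑ l, u j * (M j l * v l) := by
    rw [Finset.sum_comm]
    exact Finset.sum_congr rfl fun j _ => Finset.sum_congr rfl fun l _ => by
      rw [hsym l j]; ring
  have e1 : (v - u) ⬝ᵥ (M *ᵥ (v - u))
      = ∑ j, ∑ l, v j * (M j l * v l) - ∑ j, ∑ l, v j * (M j l * u l)
        - (∑ j, ∑ l, u j * (M j l * v l) - ∑ j, ∑ l, u j * (M j l * u l)) := by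
    calc (v - u) ⬝ᵥ (M *ᵥ (v - u))
        = ∑ j, ∑ l, (v j * (M j l * v l) - v j * (M j l * u l)
            - (u j * (M j l * v l) - u j * (M j l * u l))) := by
          rw [dot_mulVec_eq_sum]
          exact Finset.sum_congr rfl fun j _ => Finset.sum_congr rfl fun l _ => by
            simp only [Pi.sub_apply]; ring
      _ = _ := by simp only [Finset.sum_sub_distrib]
  have e2 : (πs • u + πt • v) ⬝ᵥ (M *ᵥ (πs • u + πt • v))
      = (πs * πs) * ∑ j, ∑ l, u j * (M j l * u l)
        + (πs * πt) * ∑ j, ∑ l, u j * (M j l * v l)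
        + (πt * πs) * ∑ j, ∑ l, v j * (M j l * u l)
        + (πt * πt) * ∑ j, ∑ l, v j * (M j l * v l) := by
    calc (πs • u + πt • v) ⬝ᵥ (M *ᵥ (πs • u + πt • v))
        = ∑ j, ∑ l, ((πs * πs) * (u j * (M j l * u l))
            + (πs * πt) * (u j * (M j l * v l))
            + (πt * πs) * (v j * (M j l * u l))
            + (πt * πt) * (v j * (M j l * v l))) := by
          rw [dot_mulVec_eq_sum]
          exact Finset.sum_congr rfl fun j _ => Finset.sum_congr rfl fun l _ => by
            simp only [Pi.add_apply, Pi.smul_apply, smul_eq_mul]; ring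
      _ = _ := by simp only [Finset.sum_add_distrib, ← Finset.mul_sum]
  rw [dot_mulVec_eq_sum M u u, dot_mulVec_eq_sum M v v, e1, e2, hswap]
  have h1 : πt + πs ≠ 0 := by positivity
  have h2 : πt ≠ 0 := ne_of_gt hπt
  have h3 : πs ≠ 0 := ne_of_gt hπs
  field_simp
  ring

/-- In the population setup, `σA² ≤ σB²`, with equality iff for every
stratum `z` both `β̄(z) = (πs β_t(z) + πt β_s(z))/(πs + πt)` and
`(1 − πt − πs)(β_t(z) − β_s(z)) = 0`. -/
theorem stmt6 {Ω : Type*} [MeasurableSpace Ω] (P : Measure Ω) [IsProbabilityMeasure P]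
    {𝓦 : Type*} [MeasurableSpace 𝓦]
    {𝓩 : Type*} [Fintype 𝓩] [MeasurableSpace 𝓩] [MeasurableSingletonClass 𝓩]
    {k d : ℕ} (hk : 2 ≤ k)
    (π : Fin k → ℝ) (hπ : ∀ t, π t ∈ Set.Ioo (0 : ℝ) 1) (hπsum : ∑ t, π t = 1)
    (Y : Fin k → Ω → ℝ) (W : Ω → 𝓦)
    (hYmeas : ∀ t, Measurable (Y t)) (hWmeas : Measurable W)
    (hY2 : ∀ t, MemLp (Y t) 2 P)
    (g : 𝓦 → 𝓩) (hg : Measurable g)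
    (Z : Ω → 𝓩) (hZdef : ∀ ω, Z ω = g (W ω))
    (hZpos : ∀ z, 0 < P {ω | Z ω = z})
    (h : 𝓦 → Fin d → ℝ) (hh : Measurable h)
    (X : Ω → Fin d → ℝ) (hXdef : ∀ ω, X ω = h (W ω))
    (hX2 : ∀ j, MemLp (fun ω => X ω j) 2 P)
    (hXY2 : ∀ t j, MemLp (fun ω => X ω j * Y t ω) 2 P)
    -- conditional measures and stratum probabilities
    (condP : 𝓩 → Measure Ω) (hcondP : ∀ z, condP z = P[|{ω | Z ω = z}])
    (pz : 𝓩 → ℝ) (hpz : ∀ z, pz z = (P {ω | Z ω = z}).toReal)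
    -- conditional covariance matrices, assumed positive definite
    (Smat : 𝓩 → Matrix (Fin d) (Fin d) ℝ)
    (hSmat : ∀ z j l, Smat z j l
      = ∫ ω, X ω j * X ω l ∂(condP z)
        - (∫ ω, X ω j ∂(condP z)) * (∫ ω, X ω l ∂(condP z)))
    (hSpd : ∀ z, (Smat z).PosDef)
    -- projection coefficients
    (β : Fin k → 𝓩 → Fin d → ℝ)
    (hβ : ∀ t z, β t z = (Smat z)⁻¹ *ᵥ fun j =>
      ∫ ω, X ω j * Y t ω ∂(condP z)
        - (∫ ω, X ω j ∂(condP z)) * (∫ ω, Y t ω ∂(condP z)))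
    (βb : 𝓩 → Fin d → ℝ) (hβb : ∀ z, βb z = ∑ ℓ, π ℓ • β ℓ z)
    -- the two fixed treatments
    (tt ss : Fin k) (hts : tt ≠ ss)
    -- the asymptotic variance components
    (σA2 σB2 : ℝ)
    (hσA2 : σA2
      = (∑ z, pz z *
          (variance (fun ω => Y tt ω - ∑ j, X ω j * β tt z j) (condP z) / π tt
            + variance (fun ω => Y ss ω - ∑ j, X ω j * β ss z j) (condP z) / π ss))
        + ∑ z, pz z *
            ((β tt z - β ss z) ⬝ᵥ (Smat z *ᵥ (β tt z - β ss z))))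
    (hσB2 : σB2 = ∑ z, pz z *
      (variance (fun ω => Y tt ω - ∑ j, X ω j * βb z j) (condP z) / π tt
        + variance (fun ω => Y ss ω - ∑ j, X ω j * βb z j) (condP z) / π ss)) :
    σA2 ≤ σB2 ∧
      (σA2 = σB2 ↔ ∀ z,
        βb z = (π ss + π tt)⁻¹ • (π ss • β tt z + π tt • β ss z)
          ∧ (1 - π tt - π ss) • (β tt z - β ss z) = 0) := by
  classical
  obtain ⟨hπt0, hπt1⟩ := hπ tt
  obtain ⟨hπs0, hπs1⟩ := hπ ss
  have hπtne : π tt ≠ 0 := ne_of_gt hπt0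
  have hπsne : π ss ≠ 0 := ne_of_gt hπs0
  have hS0 : (0:ℝ) < π tt + π ss := by linarith
  have hSne : π tt + π ss ≠ 0 := ne_of_gt hS0
  have hc0 : (0:ℝ) ≤ 1 - π tt - π ss := by
    have hle : ∑ i ∈ ({tt, ss} : Finset (Fin k)), π i ≤ ∑ i, π i :=
      Finset.sum_le_sum_of_subset_of_nonneg (Finset.subset_univ _)
        (fun i _ _ => (hπ i).1.le)
    rw [Finset.sum_pair hts, hπsum] at hle
    linarith
  have hZmeas : Measurable Z := by
    have hZ : Z = fun ω => g (W ω) := funext hZdef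
    rw [hZ]; exact hg.comp hWmeas
  have hPz0 : ∀ z : 𝓩, P {ω | Z ω = z} ≠ 0 := fun z => (hZpos z).ne'
  have hprob : ∀ z, IsProbabilityMeasure (condP z) := fun z => by
    rw [hcondP z]; exact cond_isProbabilityMeasure (hPz0 z)
  have hpzpos : ∀ z, 0 < pz z := fun z => by
    rw [hpz z]; exact ENNReal.toReal_pos (hPz0 z) (measure_ne_top P _)
  have htrans : ∀ (f : Ω → ℝ), MemLp f 2 P → ∀ z, MemLp f 2 (condP z) := by
    intro f hf z
    rw [hcondP z, ProbabilityTheory.cond]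
    exact (hf.restrict _).smul_measure (ENNReal.inv_ne_top.mpr (hPz0 z))
  have hY2' : ∀ t z, MemLp (Y t) 2 (condP z) := fun t z => htrans _ (hY2 t) z
  have hX2' : ∀ z (j : Fin d), MemLp (fun ω => X ω j) 2 (condP z) :=
    fun z j => htrans _ (hX2 j) z
  have hsym : ∀ z (j l : Fin d), Smat z j l = Smat z l j := by
    intro z j l
    rw [hSmat z j l, hSmat z l j]
    have hmc : (∫ ω, X ω j * X ω l ∂(condP z)) = ∫ ω, X ω l * X ω j ∂(condP z) :=
      integral_congr_ae (Filter.EventuallyEq.of_eq (funext fun ω => mul_comm _ _))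
    rw [hmc]; ring
  have hcov : ∀ t z (j : Fin d),
      (∫ ω, X ω j * Y t ω ∂(condP z))
        - (∫ ω, X ω j ∂(condP z)) * (∫ ω, Y t ω ∂(condP z))
        = ∑ l, Smat z j l * β t z l := by
    intro t z j
    have hdet : IsUnit (Smat z).det := (hSpd z).det_pos.ne'.isUnit
    have h1 : Smat z *ᵥ β t z = fun j =>
        (∫ ω, X ω j * Y t ω ∂(condP z))
          - (∫ ω, X ω j ∂(condP z)) * (∫ ω, Y t ω ∂(condP z)) := by
      rw [hβ t z, Matrix.mulVec_mulVec, Matrix.mul_nonsing_inv _ hdet, Matrix.one_mulVec]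
    rw [← congrFun h1 j]
    simp [Matrix.mulVec, dotProduct]
  have hvar : ∀ (t : Fin k) z (b : Fin d → ℝ),
      variance (fun ω => Y t ω - ∑ j, X ω j * b j) (condP z)
        = variance (fun ω => Y t ω - ∑ j, X ω j * β t z j) (condP z)
          + ((b - β t z) ⬝ᵥ (Smat z *ᵥ (b - β t z))) := by
    intro t z b
    haveI := hprob z
    rw [var_expand (hY2' t z) (hX2' z) b, var_expand (hY2' t z) (hX2' z) (β t z)]
    simp only [hcov t z]
    simp only [← hSmat]
    have hdot : (b - β t z) ⬝ᵥ (Smat z *ᵥ (b - β t z))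
        = ∑ j, ∑ l, (b j - β t z j) * (Smat z j l * (b l - β t z l)) := by
      rw [dot_mulVec_eq_sum]
      exact Finset.sum_congr rfl fun j _ => Finset.sum_congr rfl fun l _ => by
        simp [Pi.sub_apply]
    rw [hdot]
    linear_combination quad_diff (Smat z) (hsym z) b (β t z)
  have hQnn : ∀ z (w : Fin d → ℝ), 0 ≤ w ⬝ᵥ (Smat z *ᵥ w) := fun z w => by
    simpa using (hSpd z).posSemidef.dotProduct_mulVec_nonneg w
  have hQ0 : ∀ z (w : Fin d → ℝ), w ⬝ᵥ (Smat z *ᵥ w) = 0 ↔ w = 0 := by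
    intro z w
    constructor
    · intro h0
      by_contra hw
      have hlt := (hSpd z).dotProduct_mulVec_pos hw
      simp only [star_trivial] at hlt
      exact absurd h0 (ne_of_gt hlt)
    · intro h0; simp [h0]
  have hdiff : σB2 = σA2 + ∑ z, pz z *
      (((βb z - β tt z) ⬝ᵥ (Smat z *ᵥ (βb z - β tt z))) / π tt
        + ((βb z - β ss z) ⬝ᵥ (Smat z *ᵥ (βb z - β ss z))) / π ss
        - ((β tt z - β ss z) ⬝ᵥ (Smat z *ᵥ (β tt z - β ss z)))) := by
    rw [hσA2, hσB2, ← Finset.sum_add_distrib, ← Finset.sum_add_distrib]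
    refine Finset.sum_congr rfl fun z _ => ?_
    rw [hvar tt z (βb z), hvar ss z (βb z)]
    field_simp
    ring
  have hδ : ∀ z, β tt z - β ss z = (βb z - β ss z) - (βb z - β tt z) := fun z => by abel
  have hdiff2 : σB2 = σA2 + ∑ z, pz z *
      (((π ss • (βb z - β tt z) + π tt • (βb z - β ss z)) ⬝ᵥ
          (Smat z *ᵥ (π ss • (βb z - β tt z) + π tt • (βb z - β ss z))))
            / (π tt * π ss * (π tt + π ss))
        + ((1 - π tt - π ss) / (π tt + π ss)) *
            (((βb z - β ss z) - (βb z - β tt z)) ⬝ᵥ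
              (Smat z *ᵥ ((βb z - β ss z) - (βb z - β tt z))))) := by
    rw [hdiff]
    congr 1
    refine Finset.sum_congr rfl fun z _ => ?_
    rw [hδ z, key_ineq (Smat z) (hsym z) hπt0 hπs0 (βb z - β tt z) (βb z - β ss z)]
  have hTnn : ∀ z, 0 ≤ pz z *
      (((π ss • (βb z - β tt z) + π tt • (βb z - β ss z)) ⬝ᵥ
          (Smat z *ᵥ (π ss • (βb z - β tt z) + π tt • (βb z - β ss z))))
            / (π tt * π ss * (π tt + π ss))
        + ((1 - π tt - π ss) / (π tt + π ss)) *
            (((βb z - β ss z) - (βb z - β tt z)) ⬝ᵥ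
              (Smat z *ᵥ ((βb z - β ss z) - (βb z - β tt z))))) := by
    intro z
    refine mul_nonneg (hpzpos z).le (add_nonneg ?_ ?_)
    · exact div_nonneg (hQnn z _) (by positivity)
    · exact mul_nonneg (div_nonneg hc0 hS0.le) (hQnn z _)
  have hfirst : ∀ z, (π ss • (βb z - β tt z) + π tt • (βb z - β ss z) = 0)
      ↔ βb z = (π ss + π tt)⁻¹ • (π ss • β tt z + π tt • β ss z) := by
    intro z
    constructor
    · intro hw
      funext j
      have hj := congrFun hw j
      simp only [Pi.add_apply, Pi.smul_apply, Pi.sub_apply, Pi.zero_apply,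
        smul_eq_mul] at hj
      simp only [Pi.smul_apply, Pi.add_apply, smul_eq_mul]
      have hSne' : π ss + π tt ≠ 0 := by linarith
      field_simp
      linarith
    · intro hb
      funext j
      have hj := congrFun hb j
      simp only [Pi.smul_apply, Pi.add_apply, smul_eq_mul] at hj
      simp only [Pi.add_apply, Pi.smul_apply, Pi.sub_apply, Pi.zero_apply, smul_eq_mul]
      have hSne' : π ss + π tt ≠ 0 := by linarith
      field_simp at hj
      linarith
  have hsecond : ∀ z, ((1 - π tt - π ss) = 0 ∨ (βb z - β ss z) - (βb z - β tt z) = 0)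
      ↔ (1 - π tt - π ss) • (β tt z - β ss z) = 0 := by
    intro z
    rw [smul_eq_zero, ← hδ z]
  have hle : σA2 ≤ σB2 := by
    have hsn := Finset.sum_nonneg (fun z (_ : z ∈ Finset.univ) => hTnn z)
    linarith [hdiff2]
  refine ⟨hle, ?_, ?_⟩
  · intro he
    have hsum0 : ∑ z, pz z *
        (((π ss • (βb z - β tt z) + π tt • (βb z - β ss z)) ⬝ᵥ
            (Smat z *ᵥ (π ss • (βb z - β tt z) + π tt • (βb z - β ss z))))
              / (π tt * π ss * (π tt + π ss))
          + ((1 - π tt - π ss) / (π tt + π ss)) *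
              (((βb z - β ss z) - (βb z - β tt z)) ⬝ᵥ
                (Smat z *ᵥ ((βb z - β ss z) - (βb z - β tt z))))) = 0 := by
      linarith [hdiff2]
    have hz0 := (Finset.sum_eq_zero_iff_of_nonneg
      (fun z (_ : z ∈ Finset.univ) => hTnn z)).mp hsum0
    intro z
    have h0 := hz0 z (Finset.mem_univ z)
    set A := ((π ss • (βb z - β tt z) + π tt • (βb z - β ss z)) ⬝ᵥ
        (Smat z *ᵥ (π ss • (βb z - β tt z) + π tt • (βb z - β ss z))))
          / (π tt * π ss * (π tt + π ss)) with hA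
    set B := ((1 - π tt - π ss) / (π tt + π ss)) *
        (((βb z - β ss z) - (βb z - β tt z)) ⬝ᵥ
          (Smat z *ᵥ ((βb z - β ss z) - (βb z - β tt z)))) with hB
    have hAnn : 0 ≤ A := div_nonneg (hQnn z _) (by positivity)
    have hBnn : 0 ≤ B := mul_nonneg (div_nonneg hc0 hS0.le) (hQnn z _)
    have hAB : A + B = 0 := by
      rcases mul_eq_zero.mp h0 with h' | h'
      · exact absurd h' (ne_of_gt (hpzpos z))
      · exact h'
    have hA0 : A = 0 := le_antisymm (by linarith) hAnn
    have hB0 : B = 0 := by linarith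
    constructor
    · have hQw : ((π ss • (βb z - β tt z) + π tt • (βb z - β ss z)) ⬝ᵥ
          (Smat z *ᵥ (π ss • (βb z - β tt z) + π tt • (βb z - β ss z)))) = 0 := by
        rcases div_eq_zero_iff.mp hA0 with h' | h'
        · exact h'
        · exact absurd h' (by positivity)
      exact (hfirst z).mp ((hQ0 z _).mp hQw)
    · refine (hsecond z).mp ?_
      rcases mul_eq_zero.mp hB0 with h' | h'
      · left
        rcases div_eq_zero_iff.mp h' with h'' | h''
        · exact h''
        · exact absurd h'' hSne
      · right
        exact (hQ0 z _).mp h'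
  · intro hcond
    have hz0 : ∀ z, pz z *
        (((π ss • (βb z - β tt z) + π tt • (βb z - β ss z)) ⬝ᵥ
            (Smat z *ᵥ (π ss • (βb z - β tt z) + π tt • (βb z - β ss z))))
              / (π tt * π ss * (π tt + π ss))
          + ((1 - π tt - π ss) / (π tt + π ss)) *
              (((βb z - β ss z) - (βb z - β tt z)) ⬝ᵥ
                (Smat z *ᵥ ((βb z - β ss z) - (βb z - β tt z))))) = 0 := by
      intro z
      obtain ⟨h1, h2⟩ := hcond z
      have hw0 : π ss • (βb z - β tt z) + π tt • (βb z - β ss z) = 0 :=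
        (hfirst z).mpr h1
      rcases ((hsecond z).mpr h2 : _) with hcz | hdz
      · rw [hw0, hcz]; simp
      · rw [hw0, hdz]; simp
    have : ∑ z, pz z *
        (((π ss • (βb z - β tt z) + π tt • (βb z - β ss z)) ⬝ᵥ
            (Smat z *ᵥ (π ss • (βb z - β tt z) + π tt • (βb z - β ss z))))
              / (π tt * π ss * (π tt + π ss))
          + ((1 - π tt - π ss) / (π tt + π ss)) *
              (((βb z - β ss z) - (βb z - β tt z)) ⬝ᵥ
                (Smat z *ᵥ ((βb z - β ss z) - (βb z - β tt z))))) = 0 :=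
      Finset.sum_eq_zero fun z _ => hz0 z
    rw [hdiff2, this, add_zero]
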